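/- Let k be an algebraically closed field of characteristic 2, ζ ∈ k a primitive cube root of unity, n ≥ 1 an integer, and φ ∈ k with φ ≠ 1. Let H = ⟨σ, τ⟩ be a Klein four group. Define two 2n-dimensional representations of H over k in block form (blocks of size n): V_φ given by σ ↦ [[I_n, ζ(I_n + J_n(φ))], [0, I_n]] and τ ↦ [[I_n, ζ²I_n + J_n(φ)], [0, I_n]]; and W_λ given by σ ↦ [[I_n, I_n], [0, I_n]] and τ ↦ [[I_n, J_n(λ)], [0, I_n]]. Then V_φ is isomorphic as a representation of H to W_λ for λ = ζ(1 + ζφ)(1 + φ)⁻¹. In particular, V_0 ≅ W_ζ and V_{ζ²} ≅ W_0. -/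

import Mathlib

/-- The `n × n` upper-triangular Jordan block over `k` with eigenvalue `lam`. -/
def jordanBlock (k : Type) [Field k] (n : ℕ) (lam : k) : Matrix (Fin n) (Fin n) k :=
  Matrix.of fun i j => if i = j then lam else if (i : ℕ) + 1 = (j : ℕ) then 1 else 0

namespace Stmt10Aux

variable {k : Type} [Field k] {n : ℕ}

lemma N_apply (i j : Fin n) :
    jordanBlock k n 0 i j = if (i : ℕ) + 1 = (j : ℕ) then 1 else 0 := by
  simp only [jordanBlock, Matrix.of_apply]
  split_ifs with h1 h2 <;> first | rfl | (exfalso; subst h1; omega)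

lemma jordan_eq (lam : k) :
    jordanBlock k n lam = lam • (1 : Matrix (Fin n) (Fin n) k) + jordanBlock k n 0 := by
  ext i j
  simp only [jordanBlock, Matrix.add_apply, Matrix.smul_apply, Matrix.one_apply,
    Matrix.of_apply, smul_eq_mul]
  split_ifs <;> ring

lemma Nmul_apply (M : Matrix (Fin n) (Fin n) k) (i j : Fin n) :
    (jordanBlock k n 0 * M) i j =
      if h : (i : ℕ) + 1 < n then M ⟨(i : ℕ) + 1, h⟩ j else 0 := by
  rw [Matrix.mul_apply]
  split_ifs with h
  · rw [Finset.sum_eq_single (⟨(i : ℕ) + 1, h⟩ : Fin n)]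
    · rw [N_apply]; simp
    · intro b _ hb
      rw [N_apply, if_neg, zero_mul]
      intro hc; exact hb (Fin.ext hc.symm)
    · simp
  · apply Finset.sum_eq_zero
    intro b _
    rw [N_apply, if_neg, zero_mul]
    intro hc; exact h (hc ▸ b.isLt)

lemma mulN_apply (M : Matrix (Fin n) (Fin n) k) (i j : Fin n) :
    (M * jordanBlock k n 0) i j =
      if h : 0 < (j : ℕ) then
        M i ⟨(j : ℕ) - 1, Nat.lt_of_le_of_lt (Nat.sub_le _ _) j.isLt⟩ else 0 := by
  rw [Matrix.mul_apply]
  split_ifs with h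
  · rw [Finset.sum_eq_single (⟨(j : ℕ) - 1, Nat.lt_of_le_of_lt (Nat.sub_le _ _) j.isLt⟩ : Fin n)]
    · rw [N_apply, if_pos, mul_one]
      simp only []
      omega
    · intro b _ hb
      rw [N_apply, if_neg, mul_zero]
      intro hc; apply hb; apply Fin.ext; simp; omega
    · simp
  · apply Finset.sum_eq_zero
    intro b _
    rw [N_apply, if_neg, mul_zero]
    omega

/-- `T = c² + cN`. -/
def Tmat (k : Type) [Field k] (n : ℕ) (c : k) : Matrix (Fin n) (Fin n) k :=
  c ^ 2 • (1 : Matrix (Fin n) (Fin n) k) + c • jordanBlock k n 0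

lemma T_mul (c : k) (M : Matrix (Fin n) (Fin n) k) :
    Tmat k n c * M = c ^ 2 • M + c • (jordanBlock k n 0 * M) := by
  simp [Tmat, Matrix.add_mul, Matrix.smul_mul]

lemma mul_T (c : k) (M : Matrix (Fin n) (Fin n) k) :
    M * Tmat k n c = c ^ 2 • M + c • (M * jordanBlock k n 0) := by
  simp [Tmat, Matrix.mul_add, Matrix.mul_smul]

lemma T_pow_tri (c : k) (m : ℕ) :
    ∀ i j : Fin n, (j : ℕ) < (i : ℕ) → (Tmat k n c ^ m) i j = 0 := by
  induction m with
  | zero =>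
      intro i j hij
      rw [pow_zero, Matrix.one_apply_ne]
      exact fun h => by subst h; omega
  | succ m ih =>
      intro i j hij
      rw [pow_succ', T_mul, Matrix.add_apply, Matrix.smul_apply, Matrix.smul_apply,
        Nmul_apply]
      split_ifs with h
      · rw [ih i j hij, ih ⟨(i : ℕ) + 1, h⟩ j (by simp; omega)]; simp
      · rw [ih i j hij]; simp

lemma T_pow_diag (c : k) (m : ℕ) (i : Fin n) :
    (Tmat k n c ^ m) i i = (c ^ 2) ^ m := by
  induction m with
  | zero => simp
  | succ m ih =>
      rw [pow_succ', T_mul, Matrix.add_apply, Matrix.smul_apply, Matrix.smul_apply,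
        Nmul_apply]
      split_ifs with h
      · rw [ih, T_pow_tri c m ⟨(i : ℕ) + 1, h⟩ i (by simp)]
        simp [pow_succ]; ring
      · rw [ih]; simp [pow_succ]; ring

lemma T_pow_toeplitz (c : k) (m : ℕ) :
    ∀ (i j : Fin n) (hi : (i : ℕ) + 1 < n), 0 < (j : ℕ) →
      (Tmat k n c ^ m) ⟨(i : ℕ) + 1, hi⟩ j =
        (Tmat k n c ^ m) i ⟨(j : ℕ) - 1, Nat.lt_of_le_of_lt (Nat.sub_le _ _) j.isLt⟩ := by
  induction m with
  | zero =>
      intro i j hi hj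
      rw [pow_zero, Matrix.one_apply, Matrix.one_apply]
      congr 1
      simp only [eq_iff_iff, Fin.ext_iff]
      omega
  | succ m ih =>
      intro i j hi hj
      conv_lhs => rw [pow_succ' (Tmat k n c) m, T_mul]
      conv_rhs => rw [pow_succ (Tmat k n c) m, mul_T]
      simp only [Matrix.add_apply, Matrix.smul_apply, Nmul_apply, mulN_apply, smul_eq_mul]
      rw [ih i j hi hj]
      congr 1
      split_ifs with h1 h2 h2
      · rw [ih ⟨(i : ℕ) + 1, hi⟩ j (by simpa using h1) hj,
          ih i ⟨(j : ℕ) - 1, Nat.lt_of_le_of_lt (Nat.sub_le _ _) j.isLt⟩ hi (by simpa using h2)]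
      · rw [T_pow_tri c m _ _ (by have := j.isLt; simp; omega)]
      · rw [T_pow_tri c m _ _ (by have := j.isLt; simp; omega)]
      · rfl

/-- `Q` with columns the powers of `T`. -/
def Qmat (k : Type) [Field k] (n : ℕ) (c : k) : Matrix (Fin n) (Fin n) k :=
  Matrix.of fun i j => (Tmat k n c ^ (j : ℕ)) i j

lemma key1 (c : k) :
    jordanBlock k n 0 * Qmat k n c = Tmat k n c * (Qmat k n c * jordanBlock k n 0) := by
  ext i j
  rw [Nmul_apply, Matrix.mul_apply]
  by_cases hj : 0 < (j : ℕ)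
  · have hQN : ∀ l, (Qmat k n c * jordanBlock k n 0) l j =
        (Tmat k n c ^ ((j : ℕ) - 1)) l
          ⟨(j : ℕ) - 1, Nat.lt_of_le_of_lt (Nat.sub_le _ _) j.isLt⟩ := by
      intro l; rw [mulN_apply, dif_pos hj]; rfl
    simp only [hQN]
    rw [← Matrix.mul_apply, ← pow_succ', Nat.sub_add_cancel hj]
    split_ifs with h
    · exact T_pow_toeplitz c (j : ℕ) i j h hj
    · symm
      exact T_pow_tri c _ i _ (by have := j.isLt; simp; omega)
  · have hQN : ∀ l, (Qmat k n c * jordanBlock k n 0) l j = 0 := by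
      intro l; rw [mulN_apply, dif_neg hj]
    simp only [hQN, mul_zero, Finset.sum_const_zero]
    split_ifs with h
    · have hj0 : (j : ℕ) = 0 := by omega
      show (Tmat k n c ^ (j : ℕ)) ⟨(i : ℕ) + 1, h⟩ j = 0
      rw [hj0, pow_zero, Matrix.one_apply_ne]
      intro hcon
      have := congrArg Fin.val hcon
      simp [hj0] at this
    · rfl

lemma detT_isUnit {c : k} (hc : c ≠ 0) : IsUnit (Tmat k n c).det := by
  have htri : (Tmat k n c).BlockTriangular id := by
    intro i j hij
    have := T_pow_tri c 1 i j hij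
    rwa [pow_one] at this
  rw [Matrix.det_of_upperTriangular htri]
  rw [isUnit_iff_ne_zero]
  apply Finset.prod_ne_zero_iff.mpr
  intro i _
  have := T_pow_diag c 1 i
  rw [pow_one] at this
  rw [this]
  exact pow_ne_zero _ (pow_ne_zero _ hc)

lemma detQ_isUnit {c : k} (hc : c ≠ 0) : IsUnit (Qmat k n c).det := by
  have htri : (Qmat k n c).BlockTriangular id := by
    intro i j hij
    exact T_pow_tri c _ i j hij
  rw [Matrix.det_of_upperTriangular htri]
  rw [isUnit_iff_ne_zero]
  apply Finset.prod_ne_zero_iff.mpr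
  intro i _
  show (Tmat k n c ^ (i : ℕ)) i i ≠ 0
  rw [T_pow_diag]
  exact pow_ne_zero _ (pow_ne_zero _ hc)

lemma commNT (c : k) :
    jordanBlock k n 0 * Tmat k n c = Tmat k n c * jordanBlock k n 0 := by
  rw [T_mul, mul_T]

end Stmt10Aux


open Stmt10Aux in
/-- **Lemma.** For the Klein four group `H = ⟨σ, τ⟩` over an algebraically closed field
`k` of characteristic 2 with primitive cube root of unity `ζ`, and `φ ≠ 1`, the
representation `V_φ` (given on `σ, τ` by the stated block matrices) is isomorphic to
`W_λ` with `λ = ζ(1 + ζφ)(1 + φ)⁻¹`. -/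
theorem stmt_10 (k : Type) [Field k] [IsAlgClosed k] [CharP k 2]
    (ζ : k) (hζ : IsPrimitiveRoot ζ 3)
    (n : ℕ) (hn : 1 ≤ n) (φ : k) (hφ : φ ≠ 1)
    (H : Type) [Group H] (σ τ : H)
    (hσ1 : σ ≠ 1) (hτ1 : τ ≠ 1) (hστ : σ ≠ τ)
    (hσ : σ ^ 2 = 1) (hτ : τ ^ 2 = 1) (hcomm : σ * τ = τ * σ)
    (hgen : Subgroup.closure {σ, τ} = (⊤ : Subgroup H))
    (V W : H →* Matrix.GeneralLinearGroup (Fin n ⊕ Fin n) k)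
    (hVσ : (V σ : Matrix (Fin n ⊕ Fin n) (Fin n ⊕ Fin n) k) =
      Matrix.fromBlocks 1 (ζ • (1 + jordanBlock k n φ)) 0 1)
    (hVτ : (V τ : Matrix (Fin n ⊕ Fin n) (Fin n ⊕ Fin n) k) =
      Matrix.fromBlocks 1 (ζ ^ 2 • (1 : Matrix (Fin n) (Fin n) k) + jordanBlock k n φ) 0 1)
    (hWσ : (W σ : Matrix (Fin n ⊕ Fin n) (Fin n ⊕ Fin n) k) =
      Matrix.fromBlocks 1 1 0 1)
    (hWτ : (W τ : Matrix (Fin n ⊕ Fin n) (Fin n ⊕ Fin n) k) =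
      Matrix.fromBlocks 1 (jordanBlock k n (ζ * (1 + ζ * φ) * (1 + φ)⁻¹)) 0 1) :
    ∃ P : Matrix.GeneralLinearGroup (Fin n ⊕ Fin n) k,
      ∀ h : H, P * V h * P⁻¹ = W h := by
  -- scalar facts
  have h2 : (1 : k) + 1 = 0 := by
    have := CharP.cast_eq_zero k 2
    norm_num at this
    linear_combination this
  have hc : (1 : k) + φ ≠ 0 := by
    intro h
    exact hφ (by linear_combination h - h2)
  have hζ3 : ζ ^ 3 = 1 := hζ.pow_eq_one
  have hζne1 : ζ ≠ 1 := hζ.ne_one (by norm_num)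
  have hζne0 : ζ ≠ 0 := by
    intro h; rw [h] at hζ3; norm_num at hζ3
  have hprim : ζ ^ 2 + ζ + 1 = 0 := by
    have h0 : (ζ - 1) * (ζ ^ 2 + ζ + 1) = 0 := by linear_combination hζ3
    rcases mul_eq_zero.mp h0 with h | h
    · exact absurd (by linear_combination h) hζne1
    · exact h
  set lam : k := ζ * (1 + ζ * φ) * (1 + φ)⁻¹ with hlam
  -- matrices
  set N : Matrix (Fin n) (Fin n) k := jordanBlock k n 0 with hN
  set T : Matrix (Fin n) (Fin n) k := Tmat k n (1 + φ) with hT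
  set Q : Matrix (Fin n) (Fin n) k := Qmat k n (1 + φ) with hQ
  set Xb : Matrix (Fin n) (Fin n) k := ζ • (1 + jordanBlock k n φ) with hXb
  have hX : Xb = (ζ * (1 + φ)⁻¹) • T := by
    rw [hXb, hT, jordan_eq φ]
    unfold Tmat
    rw [← hN]
    match_scalars <;> field_simp <;> ring
  have hYb : ζ ^ 2 • (1 : Matrix (Fin n) (Fin n) k) + jordanBlock k n φ =
      lam • Xb + (ζ * (1 + φ)⁻¹) • N := by
    rw [hXb, hN, jordan_eq φ, hlam]
    match_scalars
    · field_simp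
      ring_nf
      linear_combination (-φ) * hζ3
    · field_simp
      ring_nf
      linear_combination (-φ) * hζ3 - hprim + h2
  haveI iT : Invertible T := Matrix.invertibleOfIsUnitDet _ (detT_isUnit hc)
  haveI iQ : Invertible Q := Matrix.invertibleOfIsUnitDet _ (detQ_isUnit hc)
  have key1' : N * Q = T * (Q * N) := key1 (1 + φ)
  have eA : Q⁻¹ * (T⁻¹ * (N * Q)) = N := by
    rw [key1', Matrix.inv_mul_cancel_left_of_invertible, Matrix.inv_mul_cancel_left_of_invertible]
  have star : N * Q⁻¹ = Q⁻¹ * (T⁻¹ * N) := by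
    conv_lhs => rw [← eA]
    simp only [Matrix.mul_assoc, Matrix.mul_inv_of_invertible, Matrix.mul_one]
  set A : Matrix (Fin n) (Fin n) k := Q⁻¹ * T ^ (n - 1) with hA
  have hNTn : N * T ^ n = T ^ n * N :=
    ((Commute.pow_right (commNT (1 + φ) : Commute N T) n)).eq
  have hpow : T ^ (n - 1) * T = T ^ n := by
    rw [← pow_succ, Nat.sub_add_cancel hn]
  have hTn' : T⁻¹ * T ^ n = T ^ (n - 1) := by
    have : T ^ n = T * T ^ (n - 1) := by
      rw [← pow_succ', Nat.sub_add_cancel hn]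
    rw [this, Matrix.inv_mul_cancel_left_of_invertible]
  have relAN : N * (A * T) = A * N := by
    calc N * (A * T) = N * Q⁻¹ * (T ^ (n - 1) * T) := by
          rw [hA]; simp only [Matrix.mul_assoc]
      _ = Q⁻¹ * (T⁻¹ * N) * T ^ n := by rw [star, hpow]
      _ = Q⁻¹ * (T⁻¹ * (T ^ n * N)) := by
          simp only [Matrix.mul_assoc, hNTn]
      _ = Q⁻¹ * (T ^ (n - 1) * N) := by
          rw [← Matrix.mul_assoc T⁻¹, hTn']
      _ = A * N := by rw [hA]; simp only [Matrix.mul_assoc]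
  have goal2 : (ζ * (1 + φ)⁻¹) • (A * N) = N * (A * Xb) := by
    rw [hX, Matrix.mul_smul, Matrix.mul_smul, relAN]
  have mainτ : A * (ζ ^ 2 • (1 : Matrix (Fin n) (Fin n) k) + jordanBlock k n φ) =
      (lam • (1 : Matrix (Fin n) (Fin n) k) + N) * (A * Xb) := by
    rw [hYb, Matrix.mul_add, Matrix.add_mul, Matrix.smul_mul, Matrix.one_mul]
    congr 1
    · rw [Matrix.mul_smul]
    · rw [Matrix.mul_smul]
      exact goal2
  -- determinants
  have hdA : IsUnit A.det := by
    rw [hA, Matrix.det_mul]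
    exact (Matrix.isUnit_nonsing_inv_det Q (detQ_isUnit hc)).mul
      (by rw [Matrix.det_pow]; exact (detT_isUnit hc).pow _)
  have hdX : IsUnit Xb.det := by
    rw [hX, Matrix.det_smul]
    exact ((isUnit_iff_ne_zero.mpr
      (pow_ne_zero _ (mul_ne_zero hζne0 (inv_ne_zero hc))))).mul (detT_isUnit hc)
  set Pm : Matrix (Fin n ⊕ Fin n) (Fin n ⊕ Fin n) k :=
    Matrix.fromBlocks A 0 0 (A * Xb) with hPm
  have hdP : IsUnit Pm.det := by
    rw [hPm, Matrix.det_fromBlocks_zero₂₁, Matrix.det_mul A Xb]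
    exact hdA.mul (hdA.mul hdX)
  haveI iP : Invertible Pm := Matrix.invertibleOfIsUnitDet _ hdP
  refine ⟨Matrix.nonsingInvUnit Pm hdP, ?_⟩
  set Pu : Matrix.GeneralLinearGroup (Fin n ⊕ Fin n) k := Matrix.nonsingInvUnit Pm hdP with hPu
  have hPuv : (Pu : Matrix (Fin n ⊕ Fin n) (Fin n ⊕ Fin n) k) = Pm := rfl
  -- the two generator equations at matrix level
  have eqσ : Pm * (V σ : Matrix (Fin n ⊕ Fin n) (Fin n ⊕ Fin n) k) = (W σ) * Pm := by
    rw [hVσ, hWσ, hPm, Matrix.fromBlocks_multiply, Matrix.fromBlocks_multiply]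
    simp [← hXb]
  have eqτ : Pm * (V τ : Matrix (Fin n ⊕ Fin n) (Fin n ⊕ Fin n) k) = (W τ) * Pm := by
    rw [hVτ, hWτ, hPm, Matrix.fromBlocks_multiply, Matrix.fromBlocks_multiply, jordan_eq lam, ← hN]
    simp only [Matrix.mul_one, Matrix.one_mul, Matrix.mul_zero, Matrix.zero_mul,
      add_zero, zero_add, zero_add, add_zero]
    rw [mainτ]
  have hgl : ∀ g : H,
      Pm * (V g : Matrix (Fin n ⊕ Fin n) (Fin n ⊕ Fin n) k) = (W g) * Pm →
      Pu * V g * Pu⁻¹ = W g := by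
    intro g hg
    apply Units.ext
    rw [Units.val_mul, Units.val_mul, Matrix.coe_units_inv, hPuv, hg,
      Matrix.mul_inv_cancel_right_of_invertible]
  intro h
  have hmem : h ∈ Subgroup.closure ({σ, τ} : Set H) := by rw [hgen]; trivial
  refine Subgroup.closure_induction ?_ ?_ ?_ ?_ hmem
  · intro x hx
    rcases hx with rfl | rfl
    · exact hgl _ eqσ
    · exact hgl _ eqτ
  · simp
  · intro x y _ _ hx hy
    rw [map_mul, map_mul, ← hx, ← hy]
    group
  · intro x _ hx
    rw [map_inv, map_inv, ← hx]
    group
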